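/- With q_t(v) = 1 - 2tv + v² = (1-v)² + 2v(1-t) and 1 < δ < 2, as t → 1⁻ one has ∫_0^1 v^{δ-1}·q_t(v)^{-δ/2} dv = (1-t)^{(1-δ)/2} · 2^{-(1+δ)/2}·√π·Γ((δ-1)/2)/Γ(δ/2) + O(1). -/

import Mathlib

open MeasureTheory Real Set intervalIntegral

lemma realBeta {u v : ℝ} (hu : 0 < u) (hv : 0 < v) :
    ∫ x in (0:ℝ)..1, x ^ (u-1) * (1-x) ^ (v-1)
      = Real.Gamma u * Real.Gamma v / Real.Gamma (u+v) := by
  have hc := Complex.Gamma_mul_Gamma_eq_betaIntegral (s := (u:ℂ)) (t := (v:ℂ))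
    (by simpa using hu) (by simpa using hv)
  have hB : Complex.betaIntegral (u:ℂ) (v:ℂ)
      = ((∫ x in (0:ℝ)..1, x ^ (u-1) * (1-x) ^ (v-1) : ℝ) : ℂ) := by
    rw [Complex.betaIntegral, ← intervalIntegral.integral_ofReal]
    apply intervalIntegral.integral_congr
    intro x hx
    rw [Set.uIcc_of_le (by norm_num : (0:ℝ) ≤ 1)] at hx
    push_cast
    rw [Complex.ofReal_cpow hx.1, Complex.ofReal_cpow (by linarith [hx.2]), Complex.ofReal_sub,
      Complex.ofReal_sub]
    norm_num
  rw [hB, ← Complex.ofReal_add, Complex.Gamma_ofReal, Complex.Gamma_ofReal,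
    Complex.Gamma_ofReal] at hc
  have hG : Real.Gamma (u+v) ≠ 0 := (Real.Gamma_pos_of_pos (by linarith)).ne'
  have : Real.Gamma u * Real.Gamma v
      = Real.Gamma (u+v) * ∫ x in (0:ℝ)..1, x ^ (u-1) * (1-x) ^ (v-1) := by
    exact_mod_cast hc
  field_simp [this]
  rw [this]; ring

lemma image_inv_one_add_sq : (fun x : ℝ => (1 + x^2)⁻¹) '' Ioi 0 = Ioo 0 1 := by
  ext y
  constructor
  · rintro ⟨x, hx, rfl⟩
    have hx0 : (0:ℝ) < x := hx
    have h1 : (1:ℝ) < 1 + x^2 := by nlinarith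
    constructor
    · positivity
    · rw [inv_lt_one_iff₀]; right; exact h1
  · rintro ⟨hy0, hy1⟩
    refine ⟨Real.sqrt (y⁻¹ - 1), ?_, ?_⟩
    · have : (1:ℝ) < y⁻¹ := (one_lt_inv_iff₀).2 ⟨hy0, hy1⟩
      exact Real.sqrt_pos.2 (by linarith)
    · have h1 : (1:ℝ) < y⁻¹ := (one_lt_inv_iff₀).2 ⟨hy0, hy1⟩
      show (1 + Real.sqrt (y⁻¹ - 1) ^ 2)⁻¹ = y
      rw [Real.sq_sqrt (by linarith)]
      field_simp
      ring

lemma subst_beta {δ : ℝ} (hδ1 : 1 < δ) :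
    ∫ x in Ioi (0:ℝ), (1 + x^2) ^ (-(δ/2))
      = ∫ y in Ioo (0:ℝ) 1, (1/2) * (y ^ ((δ-3)/2) * (1-y) ^ (-(1/2) : ℝ)) := by
  have key := integral_image_eq_integral_abs_deriv_smul (s := Ioi (0:ℝ))
    (f := fun x => (1 + x^2)⁻¹) (f' := fun x => -(2*x) / (1+x^2)^2)
    measurableSet_Ioi
    (fun x _ => by
      have h0 : (1 + x^2 : ℝ) ≠ 0 := by positivity
      have h1 : HasDerivAt (fun x : ℝ => 1 + x^2) (2*x) x := by
        simpa using ((hasDerivAt_pow 2 x).const_add 1)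
      exact (h1.inv h0).hasDerivWithinAt)
    (by
      intro a ha b hb h
      simp only [inv_inj] at h
      have h2 : a^2 = b^2 := by nlinarith [h]
      have := congrArg Real.sqrt h2
      rwa [Real.sqrt_sq (le_of_lt ha), Real.sqrt_sq (le_of_lt hb)] at this)
    (fun y => (1/2) * (y ^ ((δ-3)/2) * (1-y) ^ (-(1/2) : ℝ)))
  rw [image_inv_one_add_sq] at key
  rw [key]
  apply setIntegral_congr_fun measurableSet_Ioi
  intro x hx
  have hx0 : (0:ℝ) < x := hx
  simp only []
  have hA : (0:ℝ) < 1 + x^2 := by positivity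
  have h1A : (1 - (1+x^2)⁻¹ : ℝ) = x^2 / (1+x^2) := by field_simp; ring
  rw [smul_eq_mul, h1A]
  have habs : |-(2*x) / (1+x^2)^2| = (2*x) / (1+x^2)^2 := by
    rw [abs_div, abs_neg, abs_of_nonneg (by positivity : (0:ℝ) ≤ 2*x),
      abs_of_nonneg (by positivity : (0:ℝ) ≤ (1+x^2)^2)]
  rw [habs]
  have hq : (0:ℝ) < x^2/(1+x^2) := by positivity
  have hL : (0:ℝ) < (1+x^2) ^ (-(δ/2)) := Real.rpow_pos_of_pos hA _
  have hR : (0:ℝ) < (2*x) / (1+x^2)^2 * (1/2 * ((1+x^2)⁻¹ ^ ((δ-3)/2) * (x^2/(1+x^2)) ^ (-(1/2):ℝ))) := by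
    positivity
  apply Real.log_injOn_pos (Set.mem_Ioi.2 hL) (Set.mem_Ioi.2 hR)
  rw [Real.log_rpow hA, Real.log_mul (by positivity) (by positivity),
    Real.log_mul (by norm_num) (by positivity),
    Real.log_mul (by positivity) (by positivity),
    Real.log_div (by positivity) (by positivity),
    Real.log_rpow (by positivity), Real.log_rpow hq,
    Real.log_div (by positivity) (by positivity), Real.log_pow, Real.log_one]
  rw [Real.log_mul (by norm_num : (2:ℝ) ≠ 0) hx0.ne',
    Real.log_div (by positivity : (x^2:ℝ) ≠ 0) (by positivity : ((1+x^2):ℝ) ≠ 0),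
    Real.log_pow, Real.log_inv]
  push_cast
  ring

lemma integrable_aux {δ c : ℝ} (hδ1 : 1 < δ) (hc : 0 < c) :
    IntegrableOn (fun x : ℝ => (x^2 + c) ^ (-(δ/2))) (Ioi 0) := by
  have hcont : Continuous fun x : ℝ => (x^2 + c) ^ (-(δ/2)) := by
    apply Continuous.rpow_const (by continuity)
    intro x; left; positivity
  rw [← Set.Ioc_union_Ioi_eq_Ioi (le_of_lt one_pos)]
  apply IntegrableOn.union (hcont.integrableOn_Ioc)
  apply Integrable.mono (integrableOn_Ioi_rpow_of_lt (by linarith : -δ < -1) one_pos)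
    hcont.aestronglyMeasurable
  filter_upwards [ae_restrict_mem measurableSet_Ioi] with x hx
  have hx1 : (1:ℝ) < x := hx
  have hx0 : (0:ℝ) < x := by linarith
  rw [Real.norm_eq_abs, Real.norm_eq_abs, abs_of_nonneg (Real.rpow_nonneg (by positivity) _),
    abs_of_nonneg (Real.rpow_nonneg hx0.le _)]
  have h1 : (x:ℝ) ^ (-δ) = (x^2) ^ (-(δ/2)) := by
    rw [← Real.rpow_natCast x 2, ← Real.rpow_mul hx0.le]
    push_cast
    congr 1
    ring
  rw [h1]
  exact Real.rpow_le_rpow_of_nonpos (by positivity) (by linarith) (by linarith)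

lemma tail_bound {δ c : ℝ} (hδ1 : 1 < δ) (hc : 0 < c) :
    ∫ x in Ioi (1:ℝ), (x^2 + c) ^ (-(δ/2)) ≤ 1/(δ-1) := by
  have h1 : ∫ x in Ioi (1:ℝ), (x:ℝ) ^ (-δ) = 1/(δ-1) := by
    rw [integral_Ioi_rpow_of_lt (by linarith) one_pos]
    rw [Real.one_rpow]
    have hne : δ - 1 ≠ 0 := by linarith
    have hne' : -δ + 1 ≠ 0 := by linarith
    field_simp
    ring
  rw [← h1]
  apply setIntegral_mono_on
  · exact ((integrable_aux hδ1 hc).mono_set (Set.Ioi_subset_Ioi (le_of_lt one_pos)))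
  · exact integrableOn_Ioi_rpow_of_lt (by linarith) one_pos
  · exact measurableSet_Ioi
  · intro x hx
    have hx1 : (1:ℝ) < x := hx
    have hx0 : (0:ℝ) < x := by linarith
    have h2 : (x:ℝ) ^ (-δ) = (x^2) ^ (-(δ/2)) := by
      rw [← Real.rpow_natCast x 2, ← Real.rpow_mul hx0.le]
      push_cast
      congr 1
      ring
    rw [h2]
    exact Real.rpow_le_rpow_of_nonpos (by positivity) (by linarith) (by linarith)

lemma constA {δ : ℝ} (hδ1 : 1 < δ) :
    ∫ x in Ioi (0:ℝ), (1 + x^2) ^ (-(δ/2))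
      = Real.sqrt π * Real.Gamma ((δ-1)/2) / Real.Gamma (δ/2) / 2 := by
  rw [subst_beta hδ1, ← integral_Ioc_eq_integral_Ioo,
    ← intervalIntegral.integral_of_le (by norm_num : (0:ℝ) ≤ 1),
    intervalIntegral.integral_const_mul]
  have hb := realBeta (u := (δ-1)/2) (v := (1/2:ℝ)) (by linarith) (by norm_num)
  rw [show ((δ-1)/2 - 1 : ℝ) = (δ-3)/2 by ring, show ((1:ℝ)/2 - 1 : ℝ) = -(1/2) by ring,
    show ((δ-1)/2 + 1/2 : ℝ) = δ/2 by ring, Real.Gamma_one_half_eq] at hb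
  rw [hb]
  ring

lemma constB {δ : ℝ} (hδ1 : 1 < δ) :
    ∫ x in Ioi (0:ℝ), (x^2 + 2) ^ (-(δ/2))
      = 2 ^ (-((1+δ)/2)) * Real.sqrt π * Real.Gamma ((δ-1)/2) / Real.Gamma (δ/2) := by
  have hs : (0:ℝ) < Real.sqrt 2 := by positivity
  have key := integral_comp_mul_left_Ioi (fun x : ℝ => (x^2+2:ℝ)^(-(δ/2))) 0 hs
  simp only [mul_zero] at key
  have h1 : ∫ x in Ioi (0:ℝ), ((Real.sqrt 2 * x)^2 + 2 : ℝ)^(-(δ/2))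
      = ∫ x in Ioi (0:ℝ), 2^(-(δ/2)) * (1+x^2)^(-(δ/2)) := by
    apply setIntegral_congr_fun measurableSet_Ioi
    intro x hx
    simp only []
    rw [mul_pow, Real.sq_sqrt (by norm_num : (0:ℝ) ≤ 2),
      show (2*x^2 + 2 : ℝ) = 2 * (1+x^2) by ring,
      Real.mul_rpow (by norm_num) (by positivity)]
  rw [h1, MeasureTheory.integral_const_mul, constA hδ1, smul_eq_mul] at key
  have h2 : ∫ x in Ioi (0:ℝ), (x^2 + 2 : ℝ)^(-(δ/2))
      = Real.sqrt 2 * (2^(-(δ/2)) * (Real.sqrt π * Real.Gamma ((δ-1)/2) / Real.Gamma (δ/2) / 2)) := by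
    rw [key, ← mul_assoc, mul_inv_cancel₀ hs.ne', one_mul]
  rw [h2, Real.sqrt_eq_rpow]
  rw [show (Real.sqrt π * Real.Gamma ((δ-1)/2) / Real.Gamma (δ/2) / 2 : ℝ)
      = 2⁻¹ * (Real.sqrt π * Real.Gamma ((δ-1)/2) / Real.Gamma (δ/2)) by ring,
    ← Real.rpow_neg_one (2:ℝ)]
  rw [← mul_assoc, ← mul_assoc, ← Real.rpow_add (by norm_num : (0:ℝ) < 2),
    ← Real.rpow_add (by norm_num : (0:ℝ) < 2)]
  rw [show ((1:ℝ)/2 + -(δ/2) + -1) = -((1+δ)/2) by ring]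
  ring

lemma scaling {δ ε : ℝ} (hδ1 : 1 < δ) (hε : 0 < ε) :
    ∫ u in Ioi (0:ℝ), (u^2 + 2*ε) ^ (-(δ/2))
      = ε^((1-δ)/2) * ∫ x in Ioi (0:ℝ), (x^2+2)^(-(δ/2)) := by
  have hs : (0:ℝ) < Real.sqrt ε := Real.sqrt_pos.2 hε
  have key := integral_comp_mul_left_Ioi (fun u : ℝ => (u^2+2*ε:ℝ)^(-(δ/2))) 0 hs
  simp only [mul_zero] at key
  have h1 : ∫ x in Ioi (0:ℝ), ((Real.sqrt ε * x)^2 + 2*ε : ℝ)^(-(δ/2))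
      = ∫ x in Ioi (0:ℝ), ε^(-(δ/2)) * (x^2+2)^(-(δ/2)) := by
    apply setIntegral_congr_fun measurableSet_Ioi
    intro x hx
    simp only []
    rw [mul_pow, Real.sq_sqrt hε.le,
      show (ε*x^2 + 2*ε : ℝ) = ε * (x^2+2) by ring,
      Real.mul_rpow hε.le (by positivity)]
  rw [h1, MeasureTheory.integral_const_mul, smul_eq_mul] at key
  have h2 : ∫ u in Ioi (0:ℝ), (u^2 + 2*ε : ℝ)^(-(δ/2))
      = Real.sqrt ε * (ε^(-(δ/2)) * ∫ x in Ioi (0:ℝ), (x^2+2)^(-(δ/2))) := by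
    rw [key, ← mul_assoc, mul_inv_cancel₀ hs.ne', one_mul]
  rw [h2, Real.sqrt_eq_rpow, ← mul_assoc, ← Real.rpow_add hε,
    show ((1:ℝ)/2 + -(δ/2)) = (1-δ)/2 by ring]

lemma rpow_mvt {s a b : ℝ} (hs : 0 ≤ s) (ha : 0 < a) (hab : a ≤ b) :
    a ^ (-s) - b ^ (-s) ≤ s * a ^ (-(s+1)) * (b - a) := by
  have hderiv : ∀ x ∈ Icc a b, HasDerivWithinAt (fun x : ℝ => x ^ (-s))
      (-s * x ^ (-s-1)) (Icc a b) x := by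
    intro x hx
    have hx0 : x ≠ 0 := by have := hx.1; intro h; rw [h] at this; linarith
    exact (Real.hasDerivAt_rpow_const (p := -s) (Or.inl hx0)).hasDerivWithinAt
  have hbound : ∀ x ∈ Icc a b, ‖-s * x ^ (-s-1)‖ ≤ s * a ^ (-(s+1)) := by
    intro x hx
    have hx0 : (0:ℝ) < x := lt_of_lt_of_le ha hx.1
    rw [Real.norm_eq_abs, abs_mul, abs_neg, abs_of_nonneg hs,
      abs_of_nonneg (Real.rpow_nonneg hx0.le _)]
    have h1 : x ^ (-s-1) ≤ a ^ (-s-1) :=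
      Real.rpow_le_rpow_of_nonpos ha hx.1 (by linarith)
    rw [show (-(s+1):ℝ) = -s-1 by ring]
    exact mul_le_mul_of_nonneg_left h1 hs
  have key := Convex.norm_image_sub_le_of_norm_hasDerivWithin_le hderiv hbound
    (convex_Icc a b) (left_mem_Icc.2 hab) (right_mem_Icc.2 hab)
  rw [Real.norm_eq_abs, Real.norm_eq_abs, abs_of_nonneg (by linarith : (0:ℝ) ≤ b - a)] at key
  calc a ^ (-s) - b ^ (-s) ≤ |b ^ (-s) - a ^ (-s)| := by
        rw [abs_sub_comm]; exact le_abs_self _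
    _ ≤ s * a ^ (-(s+1)) * (b - a) := key

set_option maxHeartbeats 1000000 in
theorem stmt_16 (δ : ℝ) (hδ1 : 1 < δ) (hδ2 : δ < 2) :
    (fun t : ℝ =>
        (∫ v in (0 : ℝ)..1, v ^ (δ - 1) * (1 - 2 * t * v + v ^ 2) ^ (-(δ / 2)))
          - (1 - t) ^ ((1 - δ) / 2) *
            ((2 : ℝ) ^ (-((1 + δ) / 2)) * Real.sqrt π *
              Real.Gamma ((δ - 1) / 2) / Real.Gamma (δ / 2)))
      =O[nhdsWithin 1 (Set.Iio 1)] (fun _ => (1 : ℝ)) := by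
  rw [Asymptotics.isBigO_iff]
  refine ⟨1/(2-δ) + (δ/2 * (1/(2-δ)) + 4) + 1/(δ-1), ?_⟩
  filter_upwards [Ioo_mem_nhdsLT_of_mem (show (1:ℝ) ∈ Ioc (0:ℝ) 1 by norm_num)] with t ht
  obtain ⟨ht0, ht1⟩ := ht
  rw [norm_one, mul_one]
  set ε : ℝ := 1 - t with hεdef
  have hε : 0 < ε := by rw [hεdef]; linarith
  have hε1 : ε < 1 := by rw [hεdef]; linarith
  have hbase : ∀ v : ℝ, 1 - 2 * t * v + v ^ 2 = (1-v)^2 + 2*v*ε := by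
    intro v; rw [hεdef]; ring
  simp only [hbase]
  set P : ℝ → ℝ := fun v => v ^ (δ-1) * ((1-v)^2 + 2*v*ε) ^ (-(δ/2)) with hP
  set Qf : ℝ → ℝ := fun v => ((1-v)^2 + 2*v*ε) ^ (-(δ/2)) with hQ
  set Mf : ℝ → ℝ := fun v => ((1-v)^2 + 2*ε) ^ (-(δ/2)) with hM
  -- positivity of bases
  have hApos : ∀ v ∈ Icc (0:ℝ) 1, 0 < (1-v)^2 + 2*v*ε := by
    intro v hv
    rcases eq_or_lt_of_le hv.1 with h0 | h0
    · rw [← h0]; norm_num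
    · positivity
  -- continuity / integrability
  have hQcont : ContinuousOn Qf (Icc 0 1) := by
    apply ContinuousOn.rpow_const
    · fun_prop
    · exact fun v hv => Or.inl (hApos v hv).ne'
  have hQi : IntervalIntegrable Qf volume 0 1 := by
    apply ContinuousOn.intervalIntegrable
    rwa [uIcc_of_le (by norm_num : (0:ℝ) ≤ 1)]
  have hvcont : ContinuousOn (fun v : ℝ => v ^ (δ-1)) (Icc 0 1) := fun v _ =>
    (Real.continuousAt_rpow_const v (δ-1) (Or.inr (by linarith))).continuousWithinAt
  have hPi : IntervalIntegrable P volume 0 1 := by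
    apply ContinuousOn.intervalIntegrable
    rw [uIcc_of_le (by norm_num : (0:ℝ) ≤ 1)]
    exact hvcont.mul hQcont
  have hMcont : Continuous Mf := by
    apply Continuous.rpow_const
    · fun_prop
    · exact fun v => Or.inl (by positivity)
  have hMi : IntervalIntegrable Mf volume 0 1 := hMcont.intervalIntegrable 0 1
  have hg1 : IntervalIntegrable (fun v : ℝ => (1-v)^(1-δ)) volume 0 1 := by
    have h := (intervalIntegral.intervalIntegrable_rpow'
      (show (-1:ℝ) < 1-δ by linarith) (a := 1) (b := 0)).comp_sub_left 1
    norm_num at h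
    exact h
  have hIg1 : ∫ v in (0:ℝ)..1, (1-v)^(1-δ) = 1/(2-δ) := by
    have h := intervalIntegral.integral_comp_sub_left (a := 0) (b := 1)
      (fun u : ℝ => u ^ (1-δ)) 1
    norm_num at h
    rw [h, integral_rpow (Or.inl (by linarith : (-1:ℝ) < 1-δ))]
    rw [Real.one_rpow, Real.zero_rpow (by linarith : (1:ℝ)-δ+1 ≠ 0)]
    rw [show ((1:ℝ)-δ+1) = 2-δ by ring]
    norm_num
  -- Estimate 1
  have hE1 : ‖(∫ v in (0:ℝ)..1, P v) - ∫ v in (0:ℝ)..1, Qf v‖ ≤ 1/(2-δ) := by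
    rw [← intervalIntegral.integral_sub hPi hQi]
    have hb := intervalIntegral.norm_integral_le_abs_of_norm_le (μ := volume) (a := 0) (b := 1)
      (f := fun v => P v - Qf v) (g := fun v : ℝ => (1-v)^(1-δ)) ?_ hg1
    · rw [hIg1, abs_of_nonneg (div_nonneg zero_le_one (by linarith : (0:ℝ) ≤ 2-δ))] at hb
      exact hb
    · rw [uIoc_of_le (by norm_num : (0:ℝ) ≤ 1)]
      filter_upwards [ae_restrict_mem measurableSet_Ioc] with v hv
      obtain ⟨hv0, hv1⟩ := hv
      rcases eq_or_lt_of_le hv1 with heq | hlt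
      · rw [heq]
        simp only [hP, hQ, Real.one_rpow, one_mul, sub_self, norm_zero]
        exact Real.rpow_nonneg (by norm_num) _
      · have h1v : (0:ℝ) < 1 - v := by linarith
        have hA0 : (0:ℝ) < (1-v)^2 + 2*v*ε := by positivity
        have hQle : Qf v ≤ (1-v)^(-δ) := by
          have h1 : ((1-v)^2 : ℝ) ^ (-(δ/2)) = (1-v)^(-δ) := by
            rw [← Real.rpow_natCast (1-v) 2, ← Real.rpow_mul h1v.le]
            push_cast; congr 1; ring
          rw [← h1]
          exact Real.rpow_le_rpow_of_nonpos (by positivity) (by nlinarith) (by linarith)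
        have hvp : v ^ (δ-1) ≤ 1 := Real.rpow_le_one hv0.le hv1 (by linarith)
        have hvp2 : v ≤ v ^ (δ-1) := by
          nth_rewrite 1 [← Real.rpow_one v]
          exact Real.rpow_le_rpow_of_exponent_ge hv0 hv1 (by linarith)
        have hQpos : 0 ≤ Qf v := Real.rpow_nonneg hA0.le _
        have hnorm : ‖P v - Qf v‖ = (1 - v^(δ-1)) * Qf v := by
          rw [show P v - Qf v = -((1 - v^(δ-1)) * Qf v) by rw [hP, hQ]; ring, norm_neg,
            Real.norm_eq_abs, abs_of_nonneg (mul_nonneg (by linarith) hQpos)]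
        rw [hnorm]
        calc (1 - v^(δ-1)) * Qf v ≤ (1-v) * (1-v)^(-δ) :=
              mul_le_mul (by linarith) hQle hQpos (by linarith)
          _ = (1-v)^(1-δ) := by
              nth_rewrite 1 [← Real.rpow_one (1-v)]
              rw [← Real.rpow_add h1v, show (1:ℝ) + -δ = 1 - δ by ring]
  -- Estimate 2
  have hg2 : IntervalIntegrable (fun v : ℝ => δ/2 * (1-v)^(1-δ) + 4) volume 0 1 :=
    (hg1.const_mul (δ/2)).add intervalIntegrable_const
  have hIg2 : ∫ v in (0:ℝ)..1, (δ/2 * (1-v)^(1-δ) + 4) = δ/2 * (1/(2-δ)) + 4 := by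
    rw [intervalIntegral.integral_add (hg1.const_mul _) intervalIntegrable_const,
      intervalIntegral.integral_const_mul, hIg1]
    norm_num
  have hE2 : ‖(∫ v in (0:ℝ)..1, Qf v) - ∫ v in (0:ℝ)..1, Mf v‖ ≤ δ/2 * (1/(2-δ)) + 4 := by
    rw [← intervalIntegral.integral_sub hQi hMi]
    have hb := intervalIntegral.norm_integral_le_abs_of_norm_le (μ := volume) (a := 0) (b := 1)
      (f := fun v => Qf v - Mf v) (g := fun v : ℝ => δ/2 * (1-v)^(1-δ) + 4) ?_ hg2
    · rw [hIg2] at hb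
      have habs : |δ/2 * (1/(2-δ)) + 4| = δ/2 * (1/(2-δ)) + 4 := by
        apply abs_of_nonneg
        have h1 : (0:ℝ) ≤ 1/(2-δ) := div_nonneg zero_le_one (by linarith)
        nlinarith
      rw [habs] at hb
      exact hb
    · rw [uIoc_of_le (by norm_num : (0:ℝ) ≤ 1)]
      filter_upwards [ae_restrict_mem measurableSet_Ioc] with v hv
      obtain ⟨hv0, hv1⟩ := hv
      have hA0 : (0:ℝ) < (1-v)^2 + 2*v*ε := by positivity
      have hB0 : (0:ℝ) < (1-v)^2 + 2*ε := by positivity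
      have hAB : (1-v)^2 + 2*v*ε ≤ (1-v)^2 + 2*ε := by nlinarith
      have hD0 : 0 ≤ Qf v - Mf v := by
        have := Real.rpow_le_rpow_of_nonpos hA0 hAB (by linarith : -(δ/2) ≤ 0)
        simpa [hQ, hM] using sub_nonneg.2 this
      rw [Real.norm_eq_abs, abs_of_nonneg hD0]
      have hfirst : (0:ℝ) ≤ δ/2 * (1-v)^(1-δ) := by
        apply mul_nonneg (by linarith)
        exact Real.rpow_nonneg (by linarith) _
      rcases le_or_gt v (1/2) with hv12 | hv12
      · -- v ≤ 1/2 : crude bound by 4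
        have hq4 : Qf v ≤ 4 := by
          have h14 : (1/4 : ℝ) ≤ (1-v)^2 + 2*v*ε := by nlinarith
          have h1 : Qf v ≤ ((1:ℝ)/4) ^ (-(δ/2)) :=
            Real.rpow_le_rpow_of_nonpos (by norm_num) h14 (by linarith)
          have h2 : ((1:ℝ)/4) ^ (-(δ/2)) = (4:ℝ) ^ (δ/2) := by
            rw [show ((1:ℝ)/4) = 4⁻¹ by norm_num, Real.inv_rpow (by norm_num),
              Real.rpow_neg (by norm_num), inv_inv]
          have h3 : (4:ℝ) ^ (δ/2) ≤ 4 := by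
            nth_rewrite 2 [← Real.rpow_one (4:ℝ)]
            exact Real.rpow_le_rpow_of_exponent_le (by norm_num) (by linarith)
          linarith [h1, h2 ▸ h1]
        have hMpos : 0 ≤ Mf v := Real.rpow_nonneg hB0.le _
        linarith
      · -- 1/2 < v ≤ 1
        rcases eq_or_lt_of_le hv1 with heq | hlt
        · rw [heq]
          simp only [hQ, hM]
          norm_num
          rw [Real.zero_rpow (by linarith : (1:ℝ)-δ ≠ 0)]
          norm_num
        · have h1v : (0:ℝ) < 1 - v := by linarith
          have key := rpow_mvt (s := δ/2) (by positivity) hA0 hAB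
          have hBA : ((1-v)^2 + 2*ε) - ((1-v)^2 + 2*v*ε) = 2*ε*(1-v) := by ring
          have hA_lb : (1-v)^2 + ε ≤ (1-v)^2 + 2*v*ε := by nlinarith
          have hCpos : (0:ℝ) < (1-v)^2 + ε := by positivity
          have step1 : ((1-v)^2 + 2*v*ε) ^ (-(δ/2+1)) ≤ ((1-v)^2+ε) ^ (-(δ/2+1)) :=
            Real.rpow_le_rpow_of_nonpos hCpos hA_lb (by linarith)
          have step2 : 2*ε*(1-v) ≤ ((1-v)^2+ε) ^ ((3:ℝ)/2) := by
            have hss : Real.sqrt ε * Real.sqrt ε = ε := Real.mul_self_sqrt hε.le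
            have h2a : 2*(1-v)*Real.sqrt ε ≤ (1-v)^2 + ε := by
              nlinarith [sq_nonneg (1 - v - Real.sqrt ε), Real.sqrt_nonneg ε]
            have h2b : Real.sqrt ε ≤ ((1-v)^2+ε) ^ ((1:ℝ)/2) := by
              rw [← Real.sqrt_eq_rpow]
              exact Real.sqrt_le_sqrt (by nlinarith [sq_nonneg (1-v)])
            calc 2*ε*(1-v) = (2*(1-v)*Real.sqrt ε) * Real.sqrt ε := by
                  linear_combination (-2*(1-v)) * hss
              _ ≤ ((1-v)^2+ε) * ((1-v)^2+ε) ^ ((1:ℝ)/2) :=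
                  mul_le_mul h2a h2b (Real.sqrt_nonneg ε) (by positivity)
              _ = ((1-v)^2+ε) ^ ((3:ℝ)/2) := by
                  nth_rewrite 1 [← Real.rpow_one ((1-v)^2+ε)]
                  rw [← Real.rpow_add hCpos]; norm_num
          have step3 : ((1-v)^2+ε) ^ ((1-δ)/2) ≤ (1-v)^(1-δ) := by
            have h1 : ((1-v)^2 : ℝ) ^ ((1-δ)/2) = (1-v)^(1-δ) := by
              rw [← Real.rpow_natCast (1-v) 2, ← Real.rpow_mul h1v.le]
              push_cast; congr 1; ring
            rw [← h1]
            exact Real.rpow_le_rpow_of_nonpos (by positivity) (by nlinarith) (by linarith)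
          calc Qf v - Mf v
              ≤ δ/2 * ((1-v)^2 + 2*v*ε) ^ (-(δ/2+1)) * (((1-v)^2+2*ε) - ((1-v)^2+2*v*ε)) := key
            _ = δ/2 * ((1-v)^2 + 2*v*ε) ^ (-(δ/2+1)) * (2*ε*(1-v)) := by rw [hBA]
            _ ≤ δ/2 * ((1-v)^2+ε) ^ (-(δ/2+1)) * (2*ε*(1-v)) := by
                apply mul_le_mul_of_nonneg_right _ (by positivity)
                exact mul_le_mul_of_nonneg_left step1 (by linarith)
            _ ≤ δ/2 * ((1-v)^2+ε) ^ (-(δ/2+1)) * ((1-v)^2+ε) ^ ((3:ℝ)/2) := by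
                apply mul_le_mul_of_nonneg_left step2
                positivity
            _ = δ/2 * ((1-v)^2+ε) ^ ((1-δ)/2) := by
                rw [mul_assoc, ← Real.rpow_add hCpos,
                  show (-(δ/2+1)+(3:ℝ)/2) = (1-δ)/2 by ring]
            _ ≤ δ/2 * (1-v)^(1-δ) := mul_le_mul_of_nonneg_left step3 (by linarith)
            _ ≤ δ/2 * (1-v)^(1-δ) + 4 := by linarith
  -- M integral equals G
  have hMG : ∫ v in (0:ℝ)..1, Mf v = ∫ u in (0:ℝ)..1, (u^2 + 2*ε) ^ (-(δ/2)) := by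
    have h := intervalIntegral.integral_comp_sub_left (a := 0) (b := 1)
      (fun u : ℝ => (u^2 + 2*ε) ^ (-(δ/2))) 1
    norm_num at h
    rw [← h]
  -- split improper integral
  have h2ε : (0:ℝ) < 2*ε := by linarith
  have hfi := integrable_aux hδ1 h2ε
  have hsplit : ∫ x in Ioi (0:ℝ), (x^2+2*ε)^(-(δ/2))
      = (∫ x in Ioc (0:ℝ) 1, (x^2+2*ε)^(-(δ/2))) + ∫ x in Ioi (1:ℝ), (x^2+2*ε)^(-(δ/2)) := by
    rw [← MeasureTheory.setIntegral_union (Set.Ioc_disjoint_Ioi le_rfl) measurableSet_Ioi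
      (hfi.mono_set (by intro x hx; exact lt_of_lt_of_le hx.1 le_rfl))
      (hfi.mono_set (Set.Ioi_subset_Ioi zero_le_one)),
      Set.Ioc_union_Ioi_eq_Ioi zero_le_one]
  have hGIoc : ∫ u in (0:ℝ)..1, (u^2 + 2*ε) ^ (-(δ/2))
      = ∫ x in Ioc (0:ℝ) 1, (x^2+2*ε)^(-(δ/2)) :=
    intervalIntegral.integral_of_le zero_le_one
  have htail0 : 0 ≤ ∫ x in Ioi (1:ℝ), (x^2+2*ε)^(-(δ/2)) :=
    setIntegral_nonneg measurableSet_Ioi (fun x _ => Real.rpow_nonneg (by positivity) _)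
  have htail1 : ∫ x in Ioi (1:ℝ), (x^2+2*ε)^(-(δ/2)) ≤ 1/(δ-1) := tail_bound hδ1 h2ε
  have hH : ∫ x in Ioi (0:ℝ), (x^2+2*ε)^(-(δ/2))
      = ε^((1-δ)/2) * ((2:ℝ) ^ (-((1 + δ) / 2)) * Real.sqrt π *
          Real.Gamma ((δ - 1) / 2) / Real.Gamma (δ / 2)) := by
    rw [scaling hδ1 hε, constB hδ1]
  -- assemble
  have decomp : (∫ v in (0:ℝ)..1, P v)
        - ε^((1-δ)/2) * ((2:ℝ) ^ (-((1 + δ) / 2)) * Real.sqrt π *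
          Real.Gamma ((δ - 1) / 2) / Real.Gamma (δ / 2))
      = ((∫ v in (0:ℝ)..1, P v) - ∫ v in (0:ℝ)..1, Qf v)
        + ((∫ v in (0:ℝ)..1, Qf v) - ∫ v in (0:ℝ)..1, Mf v)
        + (-(∫ x in Ioi (1:ℝ), (x^2+2*ε)^(-(δ/2)))) := by
    rw [← hH, hsplit, hMG, hGIoc]
    ring
  rw [decomp]
  have htn : ‖-(∫ x in Ioi (1:ℝ), (x^2+2*ε)^(-(δ/2)))‖ ≤ 1/(δ-1) := by
    rw [norm_neg, Real.norm_eq_abs, abs_of_nonneg htail0]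
    exact htail1
  calc ‖_ + _ + _‖ ≤ ‖(∫ v in (0:ℝ)..1, P v) - ∫ v in (0:ℝ)..1, Qf v‖
        + ‖(∫ v in (0:ℝ)..1, Qf v) - ∫ v in (0:ℝ)..1, Mf v‖
        + ‖-(∫ x in Ioi (1:ℝ), (x^2+2*ε)^(-(δ/2)))‖ := norm_add₃_le
    _ ≤ 1/(2-δ) + (δ/2 * (1/(2-δ)) + 4) + 1/(δ-1) := by
        gcongr
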